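/- Define u : (0, ∞) → ℝ² by u(t) = ((2π²)^{−1/3}·t^{2/3}, (2π²)^{−1/3}·t^{−1/3}), and let G₂(x,y) = (−(1/4)·x³/y⁴ + (1/12)·x/y² + (1/6)·(1/x), (1/8)·x²/y³ − (1/12)·y/x² − (1/24)·(1/y)). Then for every t > 0 one has G₂(u(t)) = k₂(t)·u'(t), where k₂(t) = (1/8)·(2π²)^{2/3}·t^{−1/3}·(−3t⁴ + t² + 2). In particular, the vector field G₂ is tangent to the image of u (the curve of volume-normalized Berger metrics). -/

import Mathlib

open Real Filter Set Topology
open scoped ENNReal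

/-- The vector field of the volume-normalized spinor-flow system on Berger spheres
in the case `aμ = -1`. -/
noncomputable def G2 (x y : ℝ) : ℝ × ℝ :=
  (-(1/4) * x^3 / y^4 + (1/12) * x / y^2 + (1/6) * (1/x),
   (1/8) * x^2 / y^3 - (1/12) * y / x^2 - (1/24) * (1/y))
/-- First component of the curve of volume-one Berger metrics:
`u₁(t) = (2π²)^(-1/3) t^(2/3)`. -/
noncomputable def u1 (t : ℝ) : ℝ := (2 * π^2) ^ (-(1:ℝ)/3) * t ^ ((2:ℝ)/3)

/-- Second component: `u₂(t) = (2π²)^(-1/3) t^(-1/3)`. -/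
noncomputable def u2 (t : ℝ) : ℝ := (2 * π^2) ^ (-(1:ℝ)/3) * t ^ (-(1:ℝ)/3)

/-- The reparametrization factor `k₂(t) = (1/8)(2π²)^(2/3) t^(-1/3)(-3t⁴ + t² + 2)`. -/
noncomputable def k2 (t : ℝ) : ℝ :=
  (1/8) * (2 * π^2) ^ ((2:ℝ)/3) * t ^ (-(1:ℝ)/3) * (-3*t^4 + t^2 + 2)

/-- For every `t > 0`, `G₂(u(t)) = k₂(t) · u'(t)`: the vector field `G₂` is tangent to
the curve of volume-normalized Berger metrics. -/
theorem G2_tangent_to_u (t : ℝ) (ht : 0 < t) :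
    HasDerivAt u1 ((2 * π^2) ^ (-(1:ℝ)/3) * ((2:ℝ)/3) * t ^ (-(1:ℝ)/3)) t ∧
    HasDerivAt u2 ((2 * π^2) ^ (-(1:ℝ)/3) * (-(1:ℝ)/3) * t ^ (-(4:ℝ)/3)) t ∧
    G2 (u1 t) (u2 t) =
      (k2 t * ((2 * π^2) ^ (-(1:ℝ)/3) * ((2:ℝ)/3) * t ^ (-(1:ℝ)/3)),
       k2 t * ((2 * π^2) ^ (-(1:ℝ)/3) * (-(1:ℝ)/3) * t ^ (-(4:ℝ)/3))) := by
  have hπ : (0:ℝ) < 2 * π^2 := by positivity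
  set a : ℝ := t ^ ((1:ℝ)/3) with ha_def
  set p : ℝ := (2 * π^2) ^ ((1:ℝ)/3) with hp_def
  have ha : 0 < a := Real.rpow_pos_of_pos ht _
  have hp : 0 < p := Real.rpow_pos_of_pos hπ _
  have e1 : t ^ ((2:ℝ)/3) = a^2 := by
    rw [ha_def, ← Real.rpow_natCast (t ^ ((1:ℝ)/3)) 2, ← Real.rpow_mul ht.le]; norm_num
  have e2 : t ^ (-(1:ℝ)/3) = a⁻¹ := by
    rw [ha_def, show -(1:ℝ)/3 = -((1:ℝ)/3) by norm_num, Real.rpow_neg ht.le]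
  have e3 : t ^ (-(4:ℝ)/3) = (a^4)⁻¹ := by
    rw [ha_def, ← Real.rpow_natCast (t ^ ((1:ℝ)/3)) 4, ← Real.rpow_mul ht.le,
      ← Real.rpow_neg ht.le]; norm_num
  have e4 : (2 * π^2) ^ (-(1:ℝ)/3) = p⁻¹ := by
    rw [hp_def, show -(1:ℝ)/3 = -((1:ℝ)/3) by norm_num, Real.rpow_neg hπ.le]
  have e5 : (2 * π^2) ^ ((2:ℝ)/3) = p^2 := by
    rw [hp_def, ← Real.rpow_natCast ((2 * π^2) ^ ((1:ℝ)/3)) 2, ← Real.rpow_mul hπ.le]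
    norm_num
  have e6 : t^2 = a^6 := by
    rw [ha_def, ← Real.rpow_natCast (t ^ ((1:ℝ)/3)) 6, ← Real.rpow_mul ht.le,
      ← Real.rpow_natCast t 2]; norm_num
  have e7 : t^4 = a^12 := by
    rw [ha_def, ← Real.rpow_natCast (t ^ ((1:ℝ)/3)) 12, ← Real.rpow_mul ht.le,
      ← Real.rpow_natCast t 4]; norm_num
  refine ⟨?_, ?_, ?_⟩
  · have h := (Real.hasDerivAt_rpow_const (x := t) (p := (2:ℝ)/3)
      (Or.inl ht.ne')).const_mul ((2 * π^2) ^ (-(1:ℝ)/3))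
    have : u1 = fun t : ℝ => (2 * π^2) ^ (-(1:ℝ)/3) * t ^ ((2:ℝ)/3) := rfl
    rw [this]
    convert h using 1
    · rfl
    · rfl
    rw [show (2:ℝ)/3 - 1 = -(1:ℝ)/3 by norm_num]; ring
  · have h := (Real.hasDerivAt_rpow_const (x := t) (p := -(1:ℝ)/3)
      (Or.inl ht.ne')).const_mul ((2 * π^2) ^ (-(1:ℝ)/3))
    have : u2 = fun t : ℝ => (2 * π^2) ^ (-(1:ℝ)/3) * t ^ (-(1:ℝ)/3) := rfl
    rw [this]
    convert h using 1
    · rfl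
    · rfl
    rw [show -(1:ℝ)/3 - 1 = -(4:ℝ)/3 by norm_num]; ring
  · simp only [G2, u1, u2, k2, e1, e2, e3, e4, e5, e6, e7, Prod.mk.injEq]
    constructor <;> (field_simp; ring)
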